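/- arXiv:2601.22344 — 2 statements merged into one kernel-verified Lean document; each statement's English description precedes it below -/
import Mathlib

section
/- Let A ∈ ℂ^{n×m} be nonzero and define Φ(C) = C − C²/tr(C) for a nonzero PSD matrix C. Then the expected Gram matrix of the one-step randomly pivoted LU residual satisfies, in the PSD (Loewner) order: Σ_{(i,j): A_{ij} ≠ 0} (|A_{ij}|²/‖A‖_F²) · ( A − (1/A_{ij})·A e_j e_i^T A )* ( A − (1/A_{ij})·A e_j e_i^T A ) ⪯ 2·Φ(A*A) = 2 A*A − (2/‖A‖_F²)·(A*A)². -/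
open Matrix Finset
open scoped ComplexOrder

/-- Squared Frobenius norm of a complex matrix, `‖A‖_F² = tr(AᴴA)`. -/
noncomputable def frobSq {n m : ℕ} (A : Matrix (Fin n) (Fin m) ℂ) : ℝ :=
  ∑ i, ∑ j, ‖A i j‖ ^ 2

variable {n m : ℕ}

lemma coe_frobSq (A : Matrix (Fin n) (Fin m) ℂ) :
    ((frobSq A : ℝ) : ℂ) = ∑ i, ∑ j, (starRingEnd ℂ) (A i j) * A i j := by
  push_cast [frobSq, Complex.conj_mul', ← Complex.sq_norm]
  rfl

lemma sandwich (i : Fin n) (j : Fin m) (M : Matrix (Fin m) (Fin m) ℂ) :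
    single i j (1:ℂ) * M * single j i (1:ℂ)
      = M j j • single i i (1:ℂ) := by
  ext a b
  simp only [Matrix.mul_apply, single, of_apply, Matrix.smul_apply, ite_and, boole_mul, mul_ite,
    mul_one, mul_zero, ite_mul, zero_mul, smul_ite, smul_zero]
  by_cases ha : i = a <;> by_cases hb : i = b <;>
    simp [ha, hb, Finset.sum_ite_eq, Finset.sum_ite_eq', eq_comm, smul_eq_mul, mul_comm]

lemma trace_sum (k : ℕ) : (∑ i : Fin k, single i i (1:ℂ)) = (1 : Matrix (Fin k) (Fin k) ℂ) := by
  ext a b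
  simp [Matrix.sum_apply, single, one_apply, ite_and, Finset.sum_ite_eq, eq_comm]

lemma stdCT (i : Fin n) (j : Fin m) :
    (single j i (1:ℂ))ᴴ = single i j (1:ℂ) := by
  ext a b
  simp [conjTranspose_apply, single, and_comm, apply_ite]

lemma expand (A : Matrix (Fin n) (Fin m) ℂ) (i : Fin n) (j : Fin m) (h : A i j ≠ 0) :
    (A - (A i j)⁻¹ • (A * single j i (1:ℂ) * A))ᴴ *
      (A - (A i j)⁻¹ • (A * single j i (1:ℂ) * A))
    = Aᴴ * A - (A i j)⁻¹ • ((Aᴴ * A) * single j i (1:ℂ) * A)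
      - ((starRingEnd ℂ) (A i j))⁻¹ • (Aᴴ * single i j (1:ℂ) * (Aᴴ * A))
      + (((starRingEnd ℂ) (A i j) * A i j)⁻¹ * (Aᴴ*A) j j) • (Aᴴ * single i i (1:ℂ) * A) := by
  rw [conjTranspose_sub, conjTranspose_smul, conjTranspose_mul, conjTranspose_mul, stdCT]
  simp only [Matrix.sub_mul, Matrix.mul_sub, Matrix.smul_mul, Matrix.mul_smul, smul_smul, smul_sub]
  have h1 : Aᴴ * (A * single j i (1:ℂ) * A) = Aᴴ * A * single j i (1:ℂ) * A := by
    simp only [Matrix.mul_assoc]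
  have h2 : Aᴴ * (single i j (1:ℂ) * Aᴴ) * A = Aᴴ * single i j (1:ℂ) * (Aᴴ * A) := by
    simp only [Matrix.mul_assoc]
  have h3 : Aᴴ * (single i j (1:ℂ) * Aᴴ) * (A * single j i (1:ℂ) * A)
      = ((Aᴴ*A) j j) • (Aᴴ * single i i (1:ℂ) * A) := by
    calc Aᴴ * (single i j (1:ℂ) * Aᴴ) * (A * single j i (1:ℂ) * A)
        = Aᴴ * ((single i j (1:ℂ) * (Aᴴ*A)) * single j i (1:ℂ)) * A := by
          simp only [Matrix.mul_assoc]
      _ = _ := by rw [sandwich]; simp only [Matrix.mul_smul, Matrix.smul_mul]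
  rw [h1, h2, h3, star_inv₀, _root_.mul_inv_rev]
  have hc : star (A i j) = (starRingEnd ℂ) (A i j) := rfl
  rw [hc]
  module

lemma realsmul (r : ℝ) {a b : ℕ} (M : Matrix (Fin a) (Fin b) ℂ) :
    r • M = (r : ℂ) • M := by
  ext x y
  simp [Matrix.smul_apply, Complex.real_smul]

lemma normsq_coe (z : ℂ) : ((‖z‖^2 : ℝ) : ℂ) = (starRingEnd ℂ) z * z := by
  rw [Complex.conj_mul']
  norm_cast

lemma key (A : Matrix (Fin n) (Fin m) ℂ) (i : Fin n) (j : Fin m) :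
    (if A i j ≠ 0 then
        (‖A i j‖ ^ 2 / frobSq A) •
          ((A - (A i j)⁻¹ • (A * single j i (1:ℂ) * A))ᴴ *
            (A - (A i j)⁻¹ • (A * single j i (1:ℂ) * A)))
      else 0)
    = (((starRingEnd ℂ) (A i j) * A i j) / (frobSq A : ℂ)) • (Aᴴ * A)
      - ((starRingEnd ℂ) (A i j) / (frobSq A : ℂ)) • ((Aᴴ * A) * single j i (1:ℂ) * A)
      - ((A i j) / (frobSq A : ℂ)) • (Aᴴ * single i j (1:ℂ) * (Aᴴ * A))
      + (((Aᴴ*A) j j) / (frobSq A : ℂ)) • (Aᴴ * single i i (1:ℂ) * A)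
      - (if A i j = 0 then (((Aᴴ*A) j j) / (frobSq A : ℂ)) • (Aᴴ * single i i (1:ℂ) * A)
         else 0) := by
  by_cases h : A i j = 0
  · simp [h]
  · rw [if_pos h, if_neg h, sub_zero, expand A i j h, realsmul]
    have hns : ((‖A i j‖^2 / frobSq A : ℝ) : ℂ)
        = ((starRingEnd ℂ) (A i j) * A i j) / (frobSq A : ℂ) := by
      rw [Complex.ofReal_div, normsq_coe]
    rw [hns]
    have hc : (starRingEnd ℂ) (A i j) ≠ 0 := by simpa using h
    have h1 : A i j * (A i j)⁻¹ = 1 := mul_inv_cancel₀ h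
    have h2 : (starRingEnd ℂ) (A i j) * ((starRingEnd ℂ) (A i j))⁻¹ = 1 := mul_inv_cancel₀ hc
    match_scalars
    · ring
    · linear_combination (-((starRingEnd ℂ) (A i j)) * ((frobSq A : ℂ))⁻¹) * h1
    · linear_combination (-(A i j) * ((frobSq A : ℂ))⁻¹) * h2
    · linear_combination (((frobSq A : ℂ))⁻¹ * (Aᴴ*A) j j * ((starRingEnd ℂ) (A i j) * ((starRingEnd ℂ) (A i j))⁻¹)) * h1
        + (((frobSq A : ℂ))⁻¹ * (Aᴴ*A) j j) * h2

lemma sum_std_conj (A : Matrix (Fin n) (Fin m) ℂ) :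
    ∑ i : Fin n, ∑ j : Fin m, single j i ((starRingEnd ℂ) (A i j)) = Aᴴ := by
  rw [Finset.sum_comm]
  conv_rhs => rw [matrix_eq_sum_single Aᴴ]
  simp [conjTranspose_apply]

lemma comp1 (A : Matrix (Fin n) (Fin m) ℂ) (hf : frobSq A ≠ 0) :
    ∑ i : Fin n, ∑ j : Fin m,
      (((starRingEnd ℂ) (A i j) * A i j) / ((frobSq A : ℝ) : ℂ)) • (Aᴴ * A) = Aᴴ * A := by
  simp only [← Finset.sum_smul, div_eq_mul_inv, ← Finset.sum_mul]
  rw [← coe_frobSq]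
  rw [mul_inv_cancel₀ (by exact_mod_cast hf), one_smul]

lemma comp2 (A : Matrix (Fin n) (Fin m) ℂ) :
    ∑ i : Fin n, ∑ j : Fin m,
      ((starRingEnd ℂ) (A i j) / ((frobSq A : ℝ) : ℂ)) • ((Aᴴ * A) * single j i (1:ℂ) * A)
    = ((frobSq A : ℝ) : ℂ)⁻¹ • ((Aᴴ * A) * Aᴴ * A) := by
  have h : ∀ (i : Fin n) (j : Fin m),
      ((starRingEnd ℂ) (A i j) / ((frobSq A : ℝ) : ℂ)) • ((Aᴴ * A) * single j i (1:ℂ) * A)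
      = ((frobSq A : ℝ) : ℂ)⁻¹ • ((Aᴴ * A) * single j i ((starRingEnd ℂ) (A i j)) * A) := by
    intro i j
    rw [div_eq_mul_inv, mul_comm, ← smul_smul]
    congr 1
    rw [show single j i ((starRingEnd ℂ) (A i j))
        = (starRingEnd ℂ) (A i j) • single j i (1:ℂ) by
      rw [smul_single, smul_eq_mul, mul_one]]
    rw [Matrix.mul_smul, Matrix.smul_mul]
  simp only [h, ← Finset.smul_sum]
  congr 1
  simp only [← Matrix.sum_mul, ← Matrix.mul_sum]
  rw [sum_std_conj]

lemma comp3 (A : Matrix (Fin n) (Fin m) ℂ) :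
    ∑ i : Fin n, ∑ j : Fin m,
      ((A i j) / ((frobSq A : ℝ) : ℂ)) • (Aᴴ * single i j (1:ℂ) * (Aᴴ * A))
    = ((frobSq A : ℝ) : ℂ)⁻¹ • (Aᴴ * A * (Aᴴ * A)) := by
  have h : ∀ (i : Fin n) (j : Fin m),
      ((A i j) / ((frobSq A : ℝ) : ℂ)) • (Aᴴ * single i j (1:ℂ) * (Aᴴ * A))
      = ((frobSq A : ℝ) : ℂ)⁻¹ • (Aᴴ * single i j (A i j) * (Aᴴ * A)) := by
    intro i j
    rw [div_eq_mul_inv, mul_comm, ← smul_smul]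
    congr 1
    rw [show single i j (A i j) = (A i j) • single i j (1:ℂ) by
      rw [smul_single, smul_eq_mul, mul_one]]
    rw [Matrix.mul_smul, Matrix.smul_mul]
  simp only [h, ← Finset.smul_sum]
  congr 1
  simp only [← Matrix.sum_mul, ← Matrix.mul_sum]
  rw [← matrix_eq_sum_single A]

lemma diag_sum_eq (A : Matrix (Fin n) (Fin m) ℂ) :
    ∑ j : Fin m, (Aᴴ * A) j j = ((frobSq A : ℝ) : ℂ) := by
  rw [coe_frobSq, Finset.sum_comm]
  simp [Matrix.mul_apply, conjTranspose_apply]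

lemma comp4 (A : Matrix (Fin n) (Fin m) ℂ) (hf : frobSq A ≠ 0) :
    ∑ i : Fin n, ∑ j : Fin m,
      (((Aᴴ * A) j j) / ((frobSq A : ℝ) : ℂ)) • (Aᴴ * single i i (1:ℂ) * A)
    = Aᴴ * A := by
  rw [Finset.sum_comm]
  simp only [← Finset.smul_sum, ← Finset.sum_smul]
  simp only [← Matrix.sum_mul, ← Matrix.mul_sum]
  rw [trace_sum, Matrix.mul_one, ← Finset.sum_div, diag_sum_eq,
    div_self (by exact_mod_cast hf), one_smul]

lemma stdCT' {a b : ℕ} (i : Fin a) (j : Fin b) :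
    (single j i (1:ℂ))ᴴ = single i j (1:ℂ) := by
  ext x y
  simp [conjTranspose_apply, single, and_comm, apply_ite]

lemma psd_rsmul {k : ℕ} (M : Matrix (Fin k) (Fin k) ℂ) (hM : M.PosSemidef) (r : ℝ) (hr : 0 ≤ r) :
    ((r : ℂ) • M).PosSemidef := by
  constructor
  · have h1 := hM.1
    ext a b
    have : M b a = star (M a b) := by
      conv_lhs => rw [← h1]
      simp [conjTranspose_apply]
    simp [conjTranspose_apply, Matrix.smul_apply, this]
  · intro x
    have h2 := hM.2 x
    have hr' : (0:ℂ) ≤ (r : ℂ) := by exact_mod_cast hr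
    have he : (x.sum fun i xi => x.sum fun j xj => star xi * ((r:ℂ) • M) i j * xj)
        = (r:ℂ) * x.sum fun i xi => x.sum fun j xj => star xi * M i j * xj := by
      simp only [Finsupp.sum, Finset.mul_sum, Matrix.smul_apply, smul_eq_mul]
      exact Finset.sum_congr rfl fun _ _ => Finset.sum_congr rfl fun _ _ => by ring
    rw [he]
    exact mul_nonneg hr' h2

lemma diagG (A : Matrix (Fin n) (Fin m) ℂ) (j : Fin m) :
    (Aᴴ * A) j j = ((∑ i, ‖A i j‖^2 : ℝ) : ℂ) := by
  simp only [Matrix.mul_apply, conjTranspose_apply]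
  rw [Complex.ofReal_sum]
  exact Finset.sum_congr rfl fun i _ => (normsq_coe (A i j)).symm

lemma term_psd (A : Matrix (Fin n) (Fin m) ℂ) (hf : 0 ≤ frobSq A) (i : Fin n) (j : Fin m) :
    (if A i j = 0 then
        (((Aᴴ * A) j j) / ((frobSq A : ℝ) : ℂ)) • (Aᴴ * single i i (1:ℂ) * A)
      else 0).PosSemidef := by
  by_cases h : A i j = 0
  · rw [if_pos h]
    have hM : (Aᴴ * single i i (1:ℂ) * A).PosSemidef := by
      have hrw : Aᴴ * single i i (1:ℂ) * A
          = (single i i (1:ℂ) * A)ᴴ * (single i i (1:ℂ) * A) := by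
        rw [conjTranspose_mul, stdCT']
        rw [Matrix.mul_assoc, Matrix.mul_assoc, ← Matrix.mul_assoc (single i i (1:ℂ)),
          single_mul_single_same, one_mul]
      rw [hrw]
      exact posSemidef_conjTranspose_mul_self _
    have hco : (((Aᴴ * A) j j) / ((frobSq A : ℝ) : ℂ))
        = (((∑ i, ‖A i j‖^2) / frobSq A : ℝ) : ℂ) := by
      rw [diagG]
      push_cast
      ring
    rw [hco]
    exact psd_rsmul _ hM _ (div_nonneg (Finset.sum_nonneg fun _ _ => by positivity) hf)
  · rw [if_neg h]
    exact Matrix.PosSemidef.zero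

lemma psd_sum {k : ℕ} {ι : Type*} (s : Finset ι) (f : ι → Matrix (Fin k) (Fin k) ℂ)
    (h : ∀ i ∈ s, (f i).PosSemidef) : (∑ i ∈ s, f i).PosSemidef :=
  Finset.sum_induction f _ (fun _ _ ha hb => ha.add hb) Matrix.PosSemidef.zero h

/-- **Theorem (one-step Gram matrix bound for RPLU).**  For nonzero `A ∈ ℂ^{n×m}`, in the
Loewner (PSD) order,
`∑_{(i,j): A_{ij}≠0} (|A_{ij}|²/‖A‖_F²) (A − A_{ij}⁻¹ A e_j e_iᵀ A)ᴴ (A − A_{ij}⁻¹ A e_j e_iᵀ A)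
  ⪯ 2 Φ(AᴴA) = 2 AᴴA − (2/‖A‖_F²)(AᴴA)²`,
i.e. the difference (right minus left) is positive semidefinite. -/
theorem rplu_expected_gram_le {n m : ℕ} (A : Matrix (Fin n) (Fin m) ℂ) (hA : A ≠ 0) :
    ((2 : ℝ) • (Aᴴ * A) - (2 / frobSq A) • ((Aᴴ * A) * (Aᴴ * A)) -
      ∑ i : Fin n, ∑ j : Fin m,
        if A i j ≠ 0 then
          (‖A i j‖ ^ 2 / frobSq A) •
            ((A - (A i j)⁻¹ • (A * Matrix.single j i (1 : ℂ) * A))ᴴ *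
              (A - (A i j)⁻¹ • (A * Matrix.single j i (1 : ℂ) * A)))
        else 0).PosSemidef := by
  have hf0 : 0 ≤ frobSq A :=
    Finset.sum_nonneg fun _ _ => Finset.sum_nonneg fun _ _ => by positivity
  have hf : frobSq A ≠ 0 := by
    intro h0
    apply hA
    unfold frobSq at h0
    ext i j
    have h1 := (Finset.sum_eq_zero_iff_of_nonneg
      (fun i _ => Finset.sum_nonneg fun j _ => by positivity)).mp h0 i (Finset.mem_univ i)
    have h2 := (Finset.sum_eq_zero_iff_of_nonneg
      (fun j _ => by positivity)).mp h1 j (Finset.mem_univ j)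
    simpa using h2
  have hbig : (∑ i : Fin n, ∑ j : Fin m,
        if A i j ≠ 0 then
          (‖A i j‖ ^ 2 / frobSq A) •
            ((A - (A i j)⁻¹ • (A * Matrix.single j i (1 : ℂ) * A))ᴴ *
              (A - (A i j)⁻¹ • (A * Matrix.single j i (1 : ℂ) * A)))
        else 0)
      = Aᴴ * A - ((frobSq A : ℝ) : ℂ)⁻¹ • ((Aᴴ * A) * Aᴴ * A)
        - ((frobSq A : ℝ) : ℂ)⁻¹ • (Aᴴ * A * (Aᴴ * A)) + (Aᴴ * A)
        - ∑ i : Fin n, ∑ j : Fin m,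
            (if A i j = 0 then
              (((Aᴴ * A) j j) / ((frobSq A : ℝ) : ℂ)) • (Aᴴ * single i i (1:ℂ) * A)
            else 0) := by
    simp only [key A]
    simp only [Finset.sum_sub_distrib, Finset.sum_add_distrib]
    rw [comp1 A hf, comp2 A, comp3 A, comp4 A hf]
  rw [show ((2 : ℝ) • (Aᴴ * A) - (2 / frobSq A) • ((Aᴴ * A) * (Aᴴ * A)) -
      ∑ i : Fin n, ∑ j : Fin m,
        if A i j ≠ 0 then
          (‖A i j‖ ^ 2 / frobSq A) •
            ((A - (A i j)⁻¹ • (A * Matrix.single j i (1 : ℂ) * A))ᴴ *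
              (A - (A i j)⁻¹ • (A * Matrix.single j i (1 : ℂ) * A)))
        else 0)
      = ∑ i : Fin n, ∑ j : Fin m,
            (if A i j = 0 then
              (((Aᴴ * A) j j) / ((frobSq A : ℝ) : ℂ)) • (Aᴴ * single i i (1:ℂ) * A)
            else 0) by
    rw [hbig, realsmul, realsmul]
    push_cast
    simp only [Matrix.mul_assoc]
    module]
  exact psd_sum _ _ fun i _ => psd_sum _ _ fun j _ => term_psd A hf0 i j
end

section
/- Let C ∈ ℂ^{n×n} be positive semidefinite and let (i,j) be indices. Let L_{ij} = [C e_i, C e_j] ∈ ℂ^{n×2}, B_{ij} = [[C_{ii}, C_{ij}],[C_{ji}, C_{jj}]] ∈ ℂ^{2×2}, and K_{ij} = L_{ij} B_{ij}^† L_{ij}*. If C_{ii} ≠ 0 then tr(K_{ij}) ≥ ‖C e_i‖₂² / C_{ii}. -/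
open Matrix Finset
open scoped ComplexOrder

/-- The Moore–Penrose pseudoinverse of a square complex matrix, characterized by the four
Penrose equations (which always have a unique solution). -/
noncomputable def moorePenrose {p : ℕ} (B : Matrix (Fin p) (Fin p) ℂ) :
    Matrix (Fin p) (Fin p) ℂ :=
  open scoped Classical in
  if h : ∃ X : Matrix (Fin p) (Fin p) ℂ,
      B * X * B = B ∧ X * B * X = X ∧ (B * X)ᴴ = B * X ∧ (X * B)ᴴ = X * B
  then h.choose else 0

/-- The symmetric rank-2 correction `K_{ij} = L_{ij} B_{ij}† L_{ij}ᴴ`, where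
`L_{ij} = [C e_i, C e_j] ∈ ℂ^{n×2}` and `B_{ij} = [[C_{ii}, C_{ij}],[C_{ji}, C_{jj}]]`. -/
noncomputable def srpluK {n : ℕ} (C : Matrix (Fin n) (Fin n) ℂ) (i j : Fin n) :
    Matrix (Fin n) (Fin n) ℂ :=
  (C.submatrix id ![i, j]) * moorePenrose (C.submatrix ![i, j] ![i, j]) *
    (C.submatrix id ![i, j])ᴴ

lemma penrose_unique {p : ℕ} {B X Y : Matrix (Fin p) (Fin p) ℂ}
    (hX1 : B * X * B = B) (hX2 : X * B * X = X) (hX3 : (B * X)ᴴ = B * X)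
    (hX4 : (X * B)ᴴ = X * B)
    (hY1 : B * Y * B = B) (hY2 : Y * B * Y = Y) (hY3 : (B * Y)ᴴ = B * Y)
    (hY4 : (Y * B)ᴴ = Y * B) : X = Y := by
  have hBXY : B * X = B * Y := by
    calc B * X = (B * X)ᴴ := hX3.symm
    _ = Xᴴ * Bᴴ := by rw [conjTranspose_mul]
    _ = Xᴴ * (B * Y * B)ᴴ := by rw [hY1]
    _ = Xᴴ * (Bᴴ * (B * Y)ᴴ) := by rw [conjTranspose_mul (B * Y) B]
    _ = (Xᴴ * Bᴴ) * (B * Y) := by rw [hY3, Matrix.mul_assoc]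
    _ = (B * X)ᴴ * (B * Y) := by rw [conjTranspose_mul]
    _ = B * X * (B * Y) := by rw [hX3]
    _ = (B * X * B) * Y := by rw [Matrix.mul_assoc, Matrix.mul_assoc, Matrix.mul_assoc]
    _ = B * Y := by rw [hX1]
  have hXYB : X * B = Y * B := by
    calc X * B = (X * B)ᴴ := hX4.symm
    _ = Bᴴ * Xᴴ := by rw [conjTranspose_mul]
    _ = (B * Y * B)ᴴ * Xᴴ := by rw [hY1]
    _ = ((Y * B)ᴴ * Bᴴ) * Xᴴ := by rw [Matrix.mul_assoc B Y B, conjTranspose_mul B (Y * B)]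
    _ = Y * B * (Bᴴ * Xᴴ) := by rw [hY4, Matrix.mul_assoc]
    _ = Y * B * (X * B)ᴴ := by rw [conjTranspose_mul]
    _ = Y * B * (X * B) := by rw [hX4]
    _ = Y * (B * X * B) := by rw [Matrix.mul_assoc, Matrix.mul_assoc]
    _ = Y * B := by rw [hX1]
  calc X = X * B * X := hX2.symm
  _ = Y * B * X := by rw [hXYB]
  _ = Y * (B * X) := by rw [Matrix.mul_assoc]
  _ = Y * (B * Y) := by rw [hBXY]
  _ = Y * B * Y := by rw [Matrix.mul_assoc]
  _ = Y := hY2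

lemma moorePenrose_eq {p : ℕ} {B X : Matrix (Fin p) (Fin p) ℂ}
    (h1 : B * X * B = B) (h2 : X * B * X = X) (h3 : (B * X)ᴴ = B * X)
    (h4 : (X * B)ᴴ = X * B) : moorePenrose B = X := by
  classical
  have hex : ∃ X : Matrix (Fin p) (Fin p) ℂ,
      B * X * B = B ∧ X * B * X = X ∧ (B * X)ᴴ = B * X ∧ (X * B)ᴴ = X * B :=
    ⟨X, h1, h2, h3, h4⟩
  rw [moorePenrose, dif_pos hex]
  obtain ⟨e1, e2, e3, e4⟩ := hex.choose_spec
  exact penrose_unique e1 e2 e3 e4 h1 h2 h3 h4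

/-- **Theorem.**  For a PSD matrix `C ∈ ℂ^{n×n}` and indices `(i,j)` with `C_{ii} ≠ 0`,
the rank-2 correction satisfies `tr(K_{ij}) ≥ ‖C e_i‖₂² / C_{ii}`. -/
theorem trace_srpluK_ge {n : ℕ} (C : Matrix (Fin n) (Fin n) ℂ) (hC : C.PosSemidef)
    (i j : Fin n) (hCii : C i i ≠ 0) :
    (∑ a, ‖C a i‖ ^ 2) / (C i i).re ≤ (Matrix.trace (srpluK C i j)).re := by
  -- Notation
  set L : Matrix (Fin n) (Fin 2) ℂ := C.submatrix id ![i, j] with hL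
  set B : Matrix (Fin 2) (Fin 2) ℂ := C.submatrix ![i, j] ![i, j] with hBdef
  have hB : B = !![C i i, C i j; C j i, C j j] := by
    ext a b; fin_cases a <;> fin_cases b <;> simp [hBdef]
  -- Hermitian facts
  have hherm : ∀ a b, C b a = (starRingEnd ℂ) (C a b) := by
    intro a b
    have := congrFun (congrFun hC.1 b) a
    simpa [Matrix.conjTranspose_apply] using this.symm
  have hdiag : ∀ k, 0 ≤ C k k := by
    intro k
    simpa [Matrix.mulVec, dotProduct, Pi.single_apply] using hC.dotProduct_mulVec_nonneg (Pi.single k 1)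
  obtain ⟨hare, haim⟩ : 0 ≤ (C i i).re ∧ (C i i).im = 0 := by
    have := hdiag i; rw [Complex.le_def] at this; exact ⟨this.1, this.2.symm⟩
  obtain ⟨hgre, hgim⟩ : 0 ≤ (C j j).re ∧ (C j j).im = 0 := by
    have := hdiag j; rw [Complex.le_def] at this; exact ⟨this.1, this.2.symm⟩
  set a : ℝ := (C i i).re with hadef
  set g : ℝ := (C j j).re with hgdef
  have ha : C i i = (a : ℂ) := Complex.ext rfl haim
  have hg : C j j = (g : ℂ) := Complex.ext rfl hgim
  have ha0 : 0 < a := by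
    rcases lt_or_eq_of_le hare with h | h
    · exact h
    · exact absurd (by rw [ha, ← h]; simp) hCii
  set c : ℂ := C i j with hcdef
  have hcji : C j i = (starRingEnd ℂ) c := hherm i j
  -- scalar Gram quantities
  set S : ℂ := ∑ k, (starRingEnd ℂ) (C k i) * C k i with hSdef
  set T : ℂ := ∑ k, (starRingEnd ℂ) (C k i) * C k j with hTdef
  set U : ℂ := ∑ k, (starRingEnd ℂ) (C k j) * C k j with hUdef
  set s : ℝ := ∑ k, ‖C k i‖ ^ 2 with hsdef
  set u : ℝ := ∑ k, ‖C k j‖ ^ 2 with hudef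
  have hS : S = (s : ℂ) := by
    rw [hSdef, hsdef]; push_cast; congr 1; ext k; rw [Complex.conj_mul']
  have hU : U = (u : ℂ) := by
    rw [hUdef, hudef]; push_cast; congr 1; ext k; rw [Complex.conj_mul']
  have hTconj : (starRingEnd ℂ) T = ∑ k, (starRingEnd ℂ) (C k j) * C k i := by
    rw [hTdef, map_sum]; congr 1; ext k; simp [mul_comm]
  have hM : Lᴴ * L = !![S, T; (starRingEnd ℂ) T, U] := by
    rw [hTconj]
    ext p q; fin_cases p <;> fin_cases q <;>
      (rw [Matrix.mul_apply]; simp [hL, Matrix.conjTranspose_apply, hSdef, hTdef, hUdef])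
  -- trace formula for any X
  have htr : ∀ X : Matrix (Fin 2) (Fin 2) ℂ,
      Matrix.trace (L * X * Lᴴ) =
        S * X 0 0 + T * X 1 0 + (starRingEnd ℂ) T * X 0 1 + U * X 1 1 := by
    intro X
    rw [Matrix.trace_mul_cycle, hM]
    simp [Matrix.trace_fin_two, Matrix.mul_apply, Fin.sum_univ_two, Matrix.vecMul,
      dotProduct]
    ring
  -- Gram PSD inequality with vector ![-c, a]
  have hq : 0 ≤ (Complex.normSq c) * s - 2 * a * ((starRingEnd ℂ) c * T).re + a ^ 2 * u := by
    have h1 := (Matrix.posSemidef_conjTranspose_mul_self L).dotProduct_mulVec_nonneg ![-c, (a : ℂ)]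
    rw [hM] at h1
    have h1' := (Complex.le_def.mp h1).1
    rw [Complex.zero_re] at h1'
    have h2 : (star ![-c, (a : ℂ)] ⬝ᵥ (!![S, T; (starRingEnd ℂ) T, U] *ᵥ ![-c, (a : ℂ)])).re
        = (Complex.normSq c) * s - 2 * a * ((starRingEnd ℂ) c * T).re + a ^ 2 * u := by
      simp only [hS, hU]
      simp [dotProduct, Matrix.mulVec, Fin.sum_univ_two, Complex.normSq_apply,
        Complex.mul_re, Complex.mul_im, Complex.add_re, Complex.add_im]
      ring
    rw [h2] at h1'
    exact h1'
  -- determinant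
  set d : ℂ := C i i * C j j - C i j * C j i with hddef
  have hdreal : d = ((a * g - Complex.normSq c : ℝ) : ℂ) := by
    rw [hddef, ha, hg, hcji, ← hcdef, Complex.mul_conj]
    push_cast; ring
  set dr : ℝ := a * g - Complex.normSq c with hdrdef
  set x : Fin n → ℂ :=
    fun k => -c * (if k = i then 1 else 0) + C i i * (if k = j then 1 else 0) with hxdef
  have hCxk : ∀ k, (C *ᵥ x) k = -c * C k i + C i i * C k j := by
    intro k
    simp [hxdef, Matrix.mulVec, dotProduct, mul_add, mul_ite,
      Finset.sum_add_distrib, mul_comm]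
  have hxCx : star x ⬝ᵥ (C *ᵥ x) = (a : ℂ) * d := by
    have hdot : star x ⬝ᵥ (C *ᵥ x) =
        (starRingEnd ℂ) (-c) * (C *ᵥ x) i + (starRingEnd ℂ) (C i i) * (C *ᵥ x) j := by
      simp [hxdef, dotProduct, add_mul, mul_ite, ite_mul, Finset.sum_add_distrib,
        apply_ite (starRingEnd ℂ), Finset.sum_ite_eq', mul_comm]
    rw [hdot, hCxk i, hCxk j, hddef, ← hcdef, ha, Complex.conj_ofReal]
    push_cast
    ring
  have hdnn : 0 ≤ dr := by
    have h1 := hC.dotProduct_mulVec_nonneg x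
    rw [hxCx, hdreal] at h1
    have h2 : (0 : ℝ) ≤ a * dr := by
      have := (Complex.le_def.mp h1).1
      simpa [hdrdef] using this
    nlinarith
  by_cases hd : d ≠ 0
  · -- invertible case
    have hdrne : dr ≠ 0 := fun h0 => hd (by rw [hdreal, h0, Complex.ofReal_zero])
    have hdrpos : 0 < dr := lt_of_le_of_ne hdnn (Ne.symm hdrne)
    have hdet : B.det = d := by
      rw [hB, Matrix.det_fin_two_of, hddef, hcdef]
    have hu2 : IsUnit B.det := by rw [hdet]; exact isUnit_iff_ne_zero.2 hd
    have hBinv1 : B * B⁻¹ = 1 := Matrix.mul_nonsing_inv B hu2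
    have hBinv2 : B⁻¹ * B = 1 := Matrix.nonsing_inv_mul B hu2
    have hmp : moorePenrose B = B⁻¹ :=
      moorePenrose_eq (by rw [hBinv1, Matrix.one_mul]) (by rw [hBinv2, Matrix.one_mul])
        (by rw [hBinv1, Matrix.conjTranspose_one]) (by rw [hBinv2, Matrix.conjTranspose_one])
    have hXinv : B⁻¹ = d⁻¹ • !![C j j, -c; -((starRingEnd ℂ) c), C i i] := by
      rw [Matrix.inv_def, hdet, hB, Matrix.adjugate_fin_two, Ring.inverse_eq_inv', hcji]
      norm_num
    have hK : srpluK C i j = L * moorePenrose B * Lᴴ := rfl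
    have htr2 : Matrix.trace (srpluK C i j) = ((dr : ℂ))⁻¹ *
        ((g:ℂ) * (s:ℂ) - (starRingEnd ℂ) c * T - c * (starRingEnd ℂ) T + (a:ℂ) * (u:ℂ)) := by
      rw [hK, hmp, hXinv, htr]
      rw [hS, hU, hg, ha, hdreal]
      simp [Matrix.smul_apply]
      ring
    have hre : (Matrix.trace (srpluK C i j)).re =
        dr⁻¹ * (g * s - 2 * ((starRingEnd ℂ) c * T).re + a * u) := by
      rw [htr2, ← Complex.ofReal_inv, Complex.re_ofReal_mul]
      congr 1
      simp only [Complex.sub_re, Complex.add_re, Complex.mul_re, Complex.mul_im,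
        Complex.conj_re, Complex.conj_im, Complex.ofReal_re, Complex.ofReal_im]
      ring
    rw [hre, inv_mul_eq_div, div_le_div_iff₀ ha0 hdrpos, hdrdef]
    nlinarith [hq]
  · -- rank one case
    push_neg at hd
    -- relation C k j = (c / Cii) C k i
    have hxq : star x ⬝ᵥ (C *ᵥ x) = 0 := by rw [hxCx, hd, mul_zero]
    have hCx0 : C *ᵥ x = 0 := (hC.dotProduct_mulVec_zero_iff x).1 hxq
    have hrel : ∀ k, C i i * C k j = c * C k i := by
      intro k
      have h0 : (C *ᵥ x) k = 0 := by rw [hCx0]; rfl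
      rw [hCxk k] at h0
      linear_combination h0
    have hjj : C i i * C j j = c * (starRingEnd ℂ) c := by
      have := hd
      rw [hddef, ← hcdef, hcji] at this
      linear_combination this
    have hT1 : C i i * T = c * S := by
      rw [hTdef, hSdef, Finset.mul_sum, Finset.mul_sum]
      refine Finset.sum_congr rfl fun k _ => ?_
      rw [mul_left_comm, hrel k]
      ring
    have hT1' : C i i * (starRingEnd ℂ) T = (starRingEnd ℂ) c * S := by
      have h2 := congrArg (starRingEnd ℂ) hT1
      simp only [_root_.map_mul, hS, ha, Complex.conj_ofReal] at h2
      rw [hS, ha]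
      exact h2
    have hU1 : C i i * C i i * U = c * (starRingEnd ℂ) c * S := by
      have h1 : C i i * U = c * (starRingEnd ℂ) T := by
        rw [hUdef, hTconj, Finset.mul_sum, Finset.mul_sum]
        refine Finset.sum_congr rfl fun k _ => ?_
        rw [mul_left_comm, hrel k]
        ring
      calc C i i * C i i * U = C i i * (C i i * U) := by ring
      _ = C i i * (c * (starRingEnd ℂ) T) := by rw [h1]
      _ = c * (C i i * (starRingEnd ℂ) T) := by ring
      _ = c * ((starRingEnd ℂ) c * S) := by rw [hT1']
      _ = c * (starRingEnd ℂ) c * S := by ring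
    -- the Hermitian 2x2 matrix and its pseudoinverse
    set τ : ℂ := C i i + C j j with hτdef
    have hτ : τ = ((a + g : ℝ) : ℂ) := by rw [hτdef, ha, hg]; push_cast; ring
    have hτne : τ ≠ 0 := by
      rw [hτ]
      simp only [ne_eq, Complex.ofReal_eq_zero]
      positivity
    have hτ2ne : τ ^ 2 ≠ 0 := pow_ne_zero 2 hτne
    have hτconj : (starRingEnd ℂ) τ = τ := by rw [hτ, Complex.conj_ofReal]
    have hBherm : Bᴴ = B := by
      rw [hB]
      ext p q
      fin_cases p <;> fin_cases q <;>
        simp [Matrix.conjTranspose_apply, hcji, ha, hg, Complex.conj_ofReal]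
    have hB2 : B * B = τ • B := by
      rw [hB]
      ext p q
      fin_cases p <;> fin_cases q <;>
        simp [Matrix.mul_apply, Fin.sum_univ_two, Matrix.smul_apply, hcji, hτdef,
          smul_eq_mul] <;>
        first
        | ring1
        | linear_combination hjj
        | linear_combination -hjj
        | linear_combination (2:ℂ) * hjj
        | linear_combination (-2:ℂ) * hjj
    have hB3 : B * B * B = (τ ^ 2) • B := by
      rw [hB2, Matrix.smul_mul, hB2, smul_smul, sq]
    set X : Matrix (Fin 2) (Fin 2) ℂ := (τ ^ 2)⁻¹ • B with hXdef
    have hmp : moorePenrose B = X := by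
      refine moorePenrose_eq ?_ ?_ ?_ ?_
      · rw [hXdef, Matrix.mul_smul, Matrix.smul_mul, hB3, smul_smul,
          inv_mul_cancel₀ hτ2ne, one_smul]
      · rw [hXdef, Matrix.smul_mul, Matrix.mul_smul, Matrix.smul_mul, hB3, smul_smul,
          smul_smul]
        rw [show (τ ^ 2)⁻¹ * (τ ^ 2)⁻¹ * τ ^ 2 = (τ ^ 2)⁻¹ by
          field_simp]
      · rw [hXdef, Matrix.mul_smul, Matrix.conjTranspose_smul, Matrix.conjTranspose_mul,
          hBherm]
        rw [star_inv₀, star_pow]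
        rw [show star τ = τ from hτconj]
      · rw [hXdef, Matrix.smul_mul, Matrix.conjTranspose_smul, Matrix.conjTranspose_mul,
          hBherm]
        rw [star_inv₀, star_pow]
        rw [show star τ = τ from hτconj]
    have hK : srpluK C i j = L * moorePenrose B * Lᴴ := rfl
    have htrace : Matrix.trace (srpluK C i j) = (s : ℂ) / (a : ℂ) := by
      rw [hK, hmp, hXdef, hB, htr]
      norm_num
      rw [hcji]
      rw [eq_div_iff (by rw [← ha]; exact hCii : (a:ℂ) ≠ 0)]
      rw [← hS, ← ha]
      have hW : (S * C i i + T * (starRingEnd ℂ) c + (starRingEnd ℂ) T * c + U * C j j) *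
          C i i = S * τ ^ 2 := by
        apply mul_left_cancel₀ hCii
        rw [hτdef]
        linear_combination (C i i * (starRingEnd ℂ) c) * hT1 + (C i i * c) * hT1' +
          C j j * hU1 + (-2 * C i i * S - C j j * S) * hjj
      calc (S * ((τ ^ 2)⁻¹ * C i i) + T * ((τ ^ 2)⁻¹ * (starRingEnd ℂ) c) +
              (starRingEnd ℂ) T * ((τ ^ 2)⁻¹ * c) + U * ((τ ^ 2)⁻¹ * C j j)) * C i i
          = (τ ^ 2)⁻¹ * ((S * C i i + T * (starRingEnd ℂ) c + (starRingEnd ℂ) T * c +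
              U * C j j) * C i i) := by ring
        _ = (τ ^ 2)⁻¹ * (S * τ ^ 2) := by rw [hW]
        _ = S := by
            rw [mul_comm S (τ ^ 2), ← mul_assoc, inv_mul_cancel₀ hτ2ne, one_mul]
    rw [htrace, ← Complex.ofReal_div, Complex.ofReal_re]
end
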